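/- Let K be a field of characteristic zero, (L,[·,·]) a Lie algebra over K, and c an element of the center of the derived subalgebra [L,L] (i.e., c ∈ [L,L] and [c,u] = 0 for all u ∈ [L,L]). Then the operation a ·_c b := [[a,c],b] is commutative, associative, and is a transposed Poisson structure on (L,[·,·]). -/
import Mathlib


open scoped Classical

noncomputable section

/-- A transposed Poisson structure on a Lie algebra `(L, ⁅·,·⁆)`: a bilinear, commutative,
associative product satisfying `2 • z · ⁅x, y⁆ = ⁅z · x, y⁆ + ⁅x, z · y⁆`. -/
def IsTPStructure (K L : Type*) [Field K] [LieRing L] [LieAlgebra K L]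
    (mul : L →ₗ[K] L →ₗ[K] L) : Prop :=
  (∀ a b : L, mul a b = mul b a) ∧
  (∀ a b c : L, mul (mul a b) c = mul a (mul b c)) ∧
  (∀ x y z : L, (2 : K) • mul z ⁅x, y⁆ = ⁅mul z x, y⁆ + ⁅x, mul z y⁆)

/-- The derived subalgebra `[L, L]` (the span of all brackets), as a `K`-submodule. -/
def derivedSpan (K L : Type*) [Field K] [LieRing L] [LieAlgebra K L] : Submodule K L :=
  Submodule.span K {z : L | ∃ a b : L, z = ⁅a, b⁆}

/-- The mutation product `a ·_c b = ⁅⁅a, c⁆, b⁆`, as a bilinear map. -/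
def mutationMul (K L : Type*) [Field K] [LieRing L] [LieAlgebra K L] (c : L) :
    L →ₗ[K] L →ₗ[K] L where
  toFun a :=
    { toFun := fun b => ⁅(⁅a, c⁆ : L), b⁆
      map_add' := fun b₁ b₂ => lie_add _ _ _
      map_smul' := fun k b => by simp }
  map_add' a₁ a₂ := by ext b; simp [add_lie]
  map_smul' k a := by ext b; simp [smul_lie]

/-- for `c` in the center of the derived subalgebra `[L, L]`, the mutation
`a ·_c b = ⁅⁅a, c⁆, b⁆` is commutative, associative and a transposed Poisson structure
on `(L, ⁅·,·⁆)`. -/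
theorem statement3 (K L : Type*) [Field K] [CharZero K] [LieRing L] [LieAlgebra K L]
    (c : L) (hc1 : c ∈ derivedSpan K L) (hc2 : ∀ u ∈ derivedSpan K L, ⁅c, u⁆ = 0) :
    IsTPStructure K L (mutationMul K L c) := by
  have hmem : ∀ a b : L, (⁅a, b⁆ : L) ∈ derivedSpan K L := fun a b =>
    Submodule.subset_span ⟨a, b, rfl⟩
  have hA : ∀ a b : L, (⁅c, ⁅a, b⁆⁆ : L) = 0 := fun a b => hc2 _ (hmem a b)
  have hmul : ∀ a b : L, mutationMul K L c a b = ⁅(⁅a, c⁆ : L), b⁆ := fun a b => rfl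
  have hcomm : ∀ a b : L, mutationMul K L c a b = mutationMul K L c b a := by
    intro a b
    have key : (⁅a, ⁅b, c⁆⁆ : L) = ⁅b, ⁅a, c⁆⁆ := by
      have h0 : (⁅⁅a, b⁆, c⁆ : L) = 0 := by
        rw [← lie_skew, hA, neg_zero]
      rw [lie_lie] at h0; exact sub_eq_zero.mp h0
    rw [hmul, hmul, lie_lie, lie_lie, hA, hA, sub_zero, sub_zero,
      ← lie_skew c b, ← lie_skew c a, lie_neg, lie_neg, key]
  have hzero : ∀ z a b : L, (⁅⁅z, c⁆, ⁅a, b⁆⁆ : L) = 0 := by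
    intro z a b
    rw [lie_lie, hA, lie_zero, zero_sub, hc2 _ (hmem z ⁅a, b⁆), neg_zero]
  refine ⟨hcomm, ?_, ?_⟩
  · intro a b d
    rw [hcomm a (mutationMul K L c b d), hmul, hmul, hmul, hmul]
    have h1 : ∀ x y : L, ⁅⁅⁅x, c⁆, y⁆, c⁆ = (0 : L) := by
      intro x y
      rw [← lie_skew, hA, neg_zero]
    rw [h1, h1, zero_lie, zero_lie]
  · intro x y z
    rw [hmul, hmul, hmul, hzero, smul_zero, ← leibniz_lie, hzero]
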